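/- The concavification Ŵ(μ) = sup_{τ ∈ T_μ} ∫_{Δ(S)} W(ν) dτ(ν) is upper semicontinuous on Δ(S). -/

import Mathlib

open MeasureTheory Finset

noncomputable section

/-- Expected utility `Σ_s u(s,a) ν(s)` of action `a` under belief `ν ∈ Δ(S)`. -/
def expUtil {S α : Type*} [Fintype S] (u : S → α → ℝ) (ν : stdSimplex ℝ S) (a : α) : ℝ :=
  ∑ s, u s a * (ν : S → ℝ) s

/-- Admissible (optimal) actions `A*(ν) = argmax_a Σ_s u(s,a) ν(s)`. -/
def admissible {S α : Type*} [Fintype S] (u : S → α → ℝ) (ν : stdSimplex ℝ S) : Set α :=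
  {a | ∀ b, expUtil u ν b ≤ expUtil u ν a}

/-- The sender's gain
`W(ν) = Σ_t η(t) · max_{a ∈ A*_t(ν)} Σ_s v(s,a) ν(s)` (ties broken in the sender's favor);
the maximum over the (finite nonempty) set of admissible action profiles is expressed as a
supremum. -/
def senderGain {S L : Type*} [Fintype S] [Fintype L] [DecidableEq L]
    {A T : L → Type*} [∀ l, Fintype (A l)] [∀ l, Fintype (T l)]
    (u : ∀ l, T l → S → A l → ℝ) (v : S → (∀ l, A l) → ℝ) (η : ∀ l, T l → ℝ)
    (ν : stdSimplex ℝ S) : ℝ :=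
  ∑ t : ∀ l, T l, (∏ l, η l (t l)) *
    sSup {x : ℝ | ∃ a : ∀ l, A l, (∀ l, a l ∈ admissible (u l (t l)) ν) ∧
      x = ∑ s, v s a * (ν : S → ℝ) s}

/-- `T_μ` : Borel probability measures on `Δ(S)` with barycenter `μ`, with the topology of
weak convergence. -/
def barycentric {S : Type*} [Fintype S] (μ : stdSimplex ℝ S) :
    Set (ProbabilityMeasure (stdSimplex ℝ S)) :=
  {τ | ∀ s : S, (∫ ν, (ν : S → ℝ) s ∂(τ : Measure (stdSimplex ℝ S))) = (μ : S → ℝ) s}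

/-- The concavification `Ŵ(μ) = sup_{τ ∈ T_μ} ∫ W dτ`. -/
def concavification {S L : Type*} [Fintype S] [Fintype L] [DecidableEq L]
    {A T : L → Type*} [∀ l, Fintype (A l)] [∀ l, Fintype (T l)]
    (u : ∀ l, T l → S → A l → ℝ) (v : S → (∀ l, A l) → ℝ) (η : ∀ l, T l → ℝ)
    (μ : stdSimplex ℝ S) : ℝ :=
  sSup {x : ℝ | ∃ τ ∈ barycentric μ,
    x = ∫ ν, senderGain u v η ν ∂(τ : Measure (stdSimplex ℝ S))}


set_option linter.unusedSectionVars false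
set_option linter.unusedVariables false

private theorem extend_sum_aux {ι β M : Type*} [Fintype ι] [Fintype β] [DecidableEq β]
    [AddCommMonoid M] (g : ι ↪ β) (F : β → M)
    (hF : ∀ j, (¬∃ i, g i = j) → F j = 0) :
    ∑ j : β, F j = ∑ i : ι, F (g i) := by
  rw [← Finset.sum_image (g := g) (f := F) (fun a _ b _ h => g.injective h)]
  symm
  apply Finset.sum_subset (Finset.subset_univ _)
  intro j _ hj
  exact hF j fun ⟨i, hi⟩ => hj (Finset.mem_image.2 ⟨i, Finset.mem_univ _, hi⟩)

theorem myIsCompact_convexHull {E : Type*} [NormedAddCommGroup E] [NormedSpace ℝ E]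
    [FiniteDimensional ℝ E] {s : Set E} (hs : IsCompact s) :
    IsCompact (convexHull ℝ s) := by
  classical
  rcases s.eq_empty_or_nonempty with h | ⟨z₀, hz₀⟩
  · simp [h]
  set n := Module.finrank ℝ E + 1 with hn
  have key : convexHull ℝ s =
      (fun p : (Fin n → ℝ) × (Fin n → E) => ∑ i, p.1 i • p.2 i) ''
        ((stdSimplex ℝ (Fin n)) ×ˢ (Set.univ.pi fun _ => s)) := by
    apply Set.Subset.antisymm
    · intro x hx
      obtain ⟨ι, hι, z, w, hzs, hai, hwpos, hwsum, hx⟩ :=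
        eq_pos_convex_span_of_mem_convexHull hx
      have hne : Nonempty ι := by
        by_contra hemp
        rw [not_nonempty_iff] at hemp
        rw [Finset.sum_of_isEmpty] at hwsum
        norm_num at hwsum
      have hcard : Fintype.card ι ≤ n := by
        have h1 := hai.finrank_vectorSpan_add_one
        have h2 : Module.finrank ℝ ↥(vectorSpan ℝ (Set.range z)) ≤ Module.finrank ℝ E :=
          Submodule.finrank_le _
        omega
      obtain ⟨g⟩ : Nonempty (ι ↪ Fin n) := by
        rw [Function.Embedding.nonempty_iff_card_le]
        simpa using hcard
      have hginj : Function.Injective g := g.injective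
      refine ⟨(Function.extend g w 0, Function.extend g z fun _ => z₀), ⟨⟨?_, ?_⟩, ?_⟩, ?_⟩
      · intro j
        dsimp only
        rcases em (∃ i, g i = j) with ⟨i, rfl⟩ | hne'
        · rw [hginj.extend_apply]; exact (hwpos i).le
        · rw [Function.extend_apply' _ _ _ hne']; rfl
      · dsimp only
        rw [extend_sum_aux g _ (fun j hj => by rw [Function.extend_apply' _ _ _ hj]; rfl)]
        rw [← hwsum]
        exact Finset.sum_congr rfl fun i _ => by rw [hginj.extend_apply]
      · intro j _
        dsimp only
        rcases em (∃ i, g i = j) with ⟨i, rfl⟩ | hne'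
        · rw [hginj.extend_apply]; exact hzs (Set.mem_range_self i)
        · rw [Function.extend_apply' _ _ _ hne']; exact hz₀
      · dsimp only
        rw [extend_sum_aux g (fun j => Function.extend (⇑g) w 0 j • Function.extend (⇑g) z (fun _ => z₀) j)
          (fun j hj => by rw [Function.extend_apply' _ _ _ hj]; exact zero_smul ℝ _)]
        rw [← hx]
        exact Finset.sum_congr rfl fun i _ => by
          rw [hginj.extend_apply, hginj.extend_apply]
    · rintro x ⟨⟨w, z⟩, ⟨⟨hw0, hw1⟩, hz⟩, rfl⟩
      have := Finset.univ.centerMass_mem_convexHull (w := w) (z := z)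
        (fun i _ => hw0 i) (by rw [hw1]; norm_num) (fun i _ => hz i (Set.mem_univ i))
      rwa [Finset.centerMass_eq_of_sum_1 _ _ hw1] at this
  rw [key]
  exact ((isCompact_stdSimplex ℝ (Fin n)).prod (isCompact_univ_pi fun _ => hs)).image
    (continuous_finset_sum _ fun i _ =>
      ((continuous_apply i).comp continuous_fst).smul ((continuous_apply i).comp continuous_snd))



section Setup

variable {S : Type*} [Fintype S] [Nonempty S]
    {L : Type*} [Fintype L] [DecidableEq L]
    {A : L → Type*} [∀ l, Fintype (A l)] [∀ l, Nonempty (A l)]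
    {T : L → Type*} [∀ l, Fintype (T l)] [∀ l, Nonempty (T l)]

/-- A uniform bound on the sender's payoffs. -/
def vBound (v : S → (∀ l, A l) → ℝ) : ℝ :=
  (Finset.univ : Finset S).sup' Finset.univ_nonempty fun s =>
    (Finset.univ : Finset (∀ l, A l)).sup' Finset.univ_nonempty fun a => |v s a|

theorem abs_v_le (v : S → (∀ l, A l) → ℝ) (s : S) (a : ∀ l, A l) : |v s a| ≤ vBound v := by
  have h1 : |v s a| ≤ (Finset.univ : Finset (∀ l, A l)).sup' Finset.univ_nonempty
      fun a => |v s a| := Finset.le_sup' (f := fun a : ∀ l, A l => |v s a|) (Finset.mem_univ a)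
  have h2 : ((Finset.univ : Finset (∀ l, A l)).sup' Finset.univ_nonempty fun a => |v s a|)
      ≤ vBound v :=
    Finset.le_sup' (fun s : S => (Finset.univ : Finset (∀ l, A l)).sup' Finset.univ_nonempty
      fun a => |v s a|) (Finset.mem_univ s)
  exact h1.trans h2

theorem vBound_nonneg (v : S → (∀ l, A l) → ℝ) : 0 ≤ vBound v := by
  obtain ⟨s⟩ := (inferInstance : Nonempty S)
  obtain ⟨a⟩ := (inferInstance : Nonempty (∀ l, A l))
  exact le_trans (abs_nonneg (v s a)) (abs_v_le v s a)

theorem payoff_abs_le (v : S → (∀ l, A l) → ℝ) (a : ∀ l, A l) (ν : stdSimplex ℝ S) :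
    |∑ s, v s a * (ν : S → ℝ) s| ≤ vBound v := by
  calc |∑ s, v s a * (ν : S → ℝ) s| ≤ ∑ s, |v s a * (ν : S → ℝ) s| :=
        Finset.abs_sum_le_sum_abs _ _
    _ ≤ ∑ s, vBound v * (ν : S → ℝ) s := by
        apply Finset.sum_le_sum
        intro s _
        rw [abs_mul, abs_of_nonneg (show 0 ≤ (ν : S → ℝ) s from ν.2.1 s)]
        exact mul_le_mul_of_nonneg_right (abs_v_le v s a) (ν.2.1 s)
    _ = vBound v := by rw [← Finset.mul_sum, show ∑ s, (ν : S → ℝ) s = 1 from ν.2.2, mul_one]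

variable (u : ∀ l, T l → S → A l → ℝ) (v : S → (∀ l, A l) → ℝ)

/-- The set of available sender payoffs at a given type profile and belief. -/
def phi (t : ∀ l, T l) (ν : stdSimplex ℝ S) : Set ℝ :=
  {x : ℝ | ∃ a : ∀ l, A l, (∀ l, a l ∈ admissible (u l (t l)) ν) ∧
      x = ∑ s, v s a * (ν : S → ℝ) s}

theorem phi_finite (t : ∀ l, T l) (ν : stdSimplex ℝ S) : (phi u v t ν).Finite := by
  have : phi u v t ν ⊆ (fun a : ∀ l, A l => ∑ s, v s a * (ν : S → ℝ) s) '' Set.univ := by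
    rintro x ⟨a, -, rfl⟩
    exact ⟨a, Set.mem_univ a, rfl⟩
  exact Set.Finite.subset (Set.toFinite _) this

theorem phi_nonempty (t : ∀ l, T l) (ν : stdSimplex ℝ S) : (phi u v t ν).Nonempty := by
  have h : ∀ l, ∃ a : A l, a ∈ admissible (u l (t l)) ν := by
    intro l
    obtain ⟨a, ha⟩ := Finite.exists_max (expUtil (u l (t l)) ν)
    exact ⟨a, ha⟩
  choose a ha using h
  exact ⟨_, a, ha, rfl⟩

theorem sSup_phi_mem (t : ∀ l, T l) (ν : stdSimplex ℝ S) :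
    sSup (phi u v t ν) ∈ phi u v t ν :=
  Set.Nonempty.csSup_mem (phi_nonempty u v t ν) (phi_finite u v t ν)

theorem abs_sSup_phi_le (t : ∀ l, T l) (ν : stdSimplex ℝ S) :
    |sSup (phi u v t ν)| ≤ vBound v := by
  obtain ⟨a, -, h⟩ := sSup_phi_mem u v t ν
  rw [h]
  exact payoff_abs_le v a ν

theorem senderGain_eq (η : ∀ l, T l → ℝ) (ν : stdSimplex ℝ S) :
    senderGain u v η ν = ∑ t : ∀ l, T l, (∏ l, η l (t l)) * sSup (phi u v t ν) := rfl

theorem abs_senderGain_le (η : ∀ l, T l → ℝ) (hη : ∀ l, η l ∈ stdSimplex ℝ (T l))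
    (ν : stdSimplex ℝ S) : |senderGain u v η ν| ≤ vBound v := by
  rw [senderGain_eq]
  have hprod : ∀ t : ∀ l, T l, 0 ≤ ∏ l, η l (t l) := fun t =>
    Finset.prod_nonneg fun l _ => (hη l).1 (t l)
  calc |∑ t : ∀ l, T l, (∏ l, η l (t l)) * sSup (phi u v t ν)|
      ≤ ∑ t : ∀ l, T l, |(∏ l, η l (t l)) * sSup (phi u v t ν)| :=
        Finset.abs_sum_le_sum_abs _ _
    _ ≤ ∑ t : ∀ l, T l, (∏ l, η l (t l)) * vBound v := by
        apply Finset.sum_le_sum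
        intro t _
        rw [abs_mul, abs_of_nonneg (hprod t)]
        exact mul_le_mul_of_nonneg_left (abs_sSup_phi_le u v t ν) (hprod t)
    _ = vBound v := by
        rw [← Finset.sum_mul]
        rw [← Fintype.piFinset_univ, ← Finset.prod_univ_sum]
        have : ∀ l : L, ∑ x : T l, η l x = 1 := fun l => (hη l).2
        simp only [this, Finset.prod_const_one, one_mul]

theorem payoff_continuous (a : ∀ l, A l) :
    Continuous fun ν : stdSimplex ℝ S => ∑ s, v s a * (ν : S → ℝ) s :=
  continuous_finset_sum _ fun s _ =>
    continuous_const.mul ((continuous_apply s).comp continuous_subtype_val)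

theorem expUtil_continuous {α : Type*} (u' : S → α → ℝ) (a : α) :
    Continuous fun ν : stdSimplex ℝ S => expUtil u' ν a :=
  continuous_finset_sum _ fun s _ =>
    continuous_const.mul ((continuous_apply s).comp continuous_subtype_val)

theorem usc_sSup_phi (t : ∀ l, T l) :
    UpperSemicontinuous fun ν : stdSimplex ℝ S => sSup (phi u v t ν) := by
  intro ν0 c hc
  have hev : ∀ a : ∀ l, A l, ∀ᶠ ν in nhds ν0,
      (∀ l, a l ∈ admissible (u l (t l)) ν) → (∑ s, v s a * (ν : S → ℝ) s) < c := by
    intro a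
    by_cases hadm : ∀ l, a l ∈ admissible (u l (t l)) ν0
    · have hlt : (∑ s, v s a * (ν0 : S → ℝ) s) < c :=
        lt_of_le_of_lt (le_csSup (phi_finite u v t ν0).bddAbove ⟨a, hadm, rfl⟩) hc
      have hop : IsOpen {ν : stdSimplex ℝ S | ∑ s, v s a * (ν : S → ℝ) s < c} :=
        isOpen_lt (payoff_continuous v a) continuous_const
      filter_upwards [hop.mem_nhds hlt] with ν h _
      exact h
    · push_neg at hadm
      obtain ⟨l, hl⟩ := hadm
      have : ∃ b, expUtil (u l (t l)) ν0 (a l) < expUtil (u l (t l)) ν0 b := by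
        by_contra hcon
        push_neg at hcon
        exact hl fun b => hcon b
      obtain ⟨b, hb⟩ := this
      have hop : IsOpen {ν : stdSimplex ℝ S |
          expUtil (u l (t l)) ν (a l) < expUtil (u l (t l)) ν b} :=
        isOpen_lt (expUtil_continuous _ _) (expUtil_continuous _ _)
      filter_upwards [hop.mem_nhds hb] with ν h hadm'
      exact absurd (hadm' l b) (not_le.2 h)
  have hall := Filter.eventually_all.2 hev
  filter_upwards [hall] with ν h
  obtain ⟨a, hadm, hpay⟩ := sSup_phi_mem u v t ν
  rw [hpay]
  exact h a hadm

theorem UpperSemicontinuous.const_mul'' {α : Type*} [TopologicalSpace α] {f : α → ℝ}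
    (hf : UpperSemicontinuous f) {c : ℝ} (hc : 0 ≤ c) :
    UpperSemicontinuous fun x => c * f x := by
  rcases eq_or_lt_of_le hc with rfl | hc
  · simpa using upperSemicontinuous_const (z := (0 : ℝ))
  · intro x y hy
    have hxy : f x < y / c := by rwa [lt_div_iff₀' hc]
    filter_upwards [hf x _ hxy] with z hz
    rwa [← lt_div_iff₀' hc]

theorem senderGain_usc (η : ∀ l, T l → ℝ) (hη : ∀ l, η l ∈ stdSimplex ℝ (T l)) :
    UpperSemicontinuous (senderGain u v η) := by
  have heq : senderGain u v η =
      fun ν => ∑ t : ∀ l, T l, (∏ l, η l (t l)) * sSup (phi u v t ν) := rfl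
  rw [heq]
  apply upperSemicontinuous_sum
  intro t _
  exact (usc_sSup_phi u v t).const_mul''
    (Finset.prod_nonneg fun l _ => (hη l).1 (t l))

end Setup

theorem usc_isClosed_hypograph {X : Type*} [TopologicalSpace X] {f : X → ℝ}
    (hf : UpperSemicontinuous f) : IsClosed {p : X × ℝ | p.2 ≤ f p.1} := by
  rw [← isOpen_compl_iff, isOpen_iff_mem_nhds]
  rintro ⟨x, y⟩ hp
  simp only [Set.mem_compl_iff, Set.mem_setOf_eq, not_le] at hp
  obtain ⟨c, hc1, hc2⟩ := exists_between hp
  have h1 : {x' | f x' < c} ×ˢ Set.Ioi c ∈ nhds (x, y) := by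
    rw [nhds_prod_eq]
    exact Filter.prod_mem_prod (hf x c hc1) (Ioi_mem_nhds hc2)
  apply Filter.mem_of_superset h1
  rintro ⟨x', y'⟩ ⟨hx', hy'⟩
  simp only [Set.mem_compl_iff, Set.mem_setOf_eq, not_le]
  exact hx'.trans hy'

section Geom

variable {S : Type*} [Fintype S] [Nonempty S]

instance stdSimplex.compactSpace : CompactSpace (stdSimplex ℝ S) :=
  isCompact_iff_compactSpace.1 (isCompact_stdSimplex ℝ S)

variable (W : stdSimplex ℝ S → ℝ) (M : ℝ)

/-- The (truncated) hypograph of `W`, inside the ambient space `(S → ℝ) × ℝ`. -/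
def hypo : Set ((S → ℝ) × ℝ) :=
  (fun q : stdSimplex ℝ S × ℝ => ((q.1 : S → ℝ), q.2)) '' {q | -M ≤ q.2 ∧ q.2 ≤ W q.1}

/-- The convex hull of the truncated hypograph. -/
def cvx : Set ((S → ℝ) × ℝ) := convexHull ℝ (hypo W M)

/-- Value function obtained from the convex hull of the hypograph. -/
def gfun (μ : stdSimplex ℝ S) : ℝ := sSup {y | ((μ : S → ℝ), y) ∈ cvx W M}

variable {W M}

theorem isCompact_hypo (hW : ∀ ν, |W ν| ≤ M) (hWu : UpperSemicontinuous W) :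
    IsCompact (hypo W M) := by
  have h1 : IsClosed {q : stdSimplex ℝ S × ℝ | -M ≤ q.2 ∧ q.2 ≤ W q.1} := by
    have : {q : stdSimplex ℝ S × ℝ | -M ≤ q.2 ∧ q.2 ≤ W q.1} =
        {q : stdSimplex ℝ S × ℝ | -M ≤ q.2} ∩ {q : stdSimplex ℝ S × ℝ | q.2 ≤ W q.1} := rfl
    rw [this]
    exact (isClosed_le continuous_const continuous_snd).inter (usc_isClosed_hypograph hWu)
  have h2 : {q : stdSimplex ℝ S × ℝ | -M ≤ q.2 ∧ q.2 ≤ W q.1} ⊆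
      (Set.univ : Set (stdSimplex ℝ S)) ×ˢ Set.Icc (-M) M := by
    rintro ⟨ν, y⟩ ⟨h1', h2'⟩
    exact ⟨Set.mem_univ _, h1', h2'.trans ((abs_le.1 (hW ν)).2)⟩
  have h3 : IsCompact {q : stdSimplex ℝ S × ℝ | -M ≤ q.2 ∧ q.2 ≤ W q.1} :=
    (isCompact_univ.prod isCompact_Icc).of_isClosed_subset h1 h2
  exact h3.image (continuous_subtype_val.prodMap continuous_id)

theorem hypo_subset_box (hW : ∀ ν, |W ν| ≤ M) :
    hypo W M ⊆ {p : (S → ℝ) × ℝ | p.1 ∈ stdSimplex ℝ S ∧ p.2 ∈ Set.Icc (-M) M} := by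
  rintro p ⟨⟨ν, y⟩, ⟨hy1, hy2⟩, rfl⟩
  exact ⟨ν.2, hy1, hy2.trans ((abs_le.1 (hW ν)).2)⟩

theorem cvx_subset_box (hW : ∀ ν, |W ν| ≤ M) :
    cvx W M ⊆ {p : (S → ℝ) × ℝ | p.1 ∈ stdSimplex ℝ S ∧ p.2 ∈ Set.Icc (-M) M} := by
  apply convexHull_min (hypo_subset_box hW)
  have : {p : (S → ℝ) × ℝ | p.1 ∈ stdSimplex ℝ S ∧ p.2 ∈ Set.Icc (-M) M} =
      (stdSimplex ℝ S) ×ˢ Set.Icc (-M) M := rfl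
  rw [this]
  exact (convex_stdSimplex ℝ S).prod (convex_Icc _ _)

theorem isCompact_cvx (hW : ∀ ν, |W ν| ≤ M) (hWu : UpperSemicontinuous W) :
    IsCompact (cvx W M) :=
  myIsCompact_convexHull (isCompact_hypo hW hWu)

theorem mem_hypo_self (hW : ∀ ν, |W ν| ≤ M) (μ : stdSimplex ℝ S) :
    ((μ : S → ℝ), W μ) ∈ hypo W M :=
  ⟨(μ, W μ), ⟨(abs_le.1 (hW μ)).1, le_refl _⟩, rfl⟩

theorem slice_nonempty (hW : ∀ ν, |W ν| ≤ M) (μ : stdSimplex ℝ S) :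
    {y | ((μ : S → ℝ), y) ∈ cvx W M}.Nonempty :=
  ⟨W μ, subset_convexHull ℝ _ (mem_hypo_self hW μ)⟩

theorem slice_bddAbove (hW : ∀ ν, |W ν| ≤ M) (μ : stdSimplex ℝ S) :
    BddAbove {y | ((μ : S → ℝ), y) ∈ cvx W M} :=
  ⟨M, fun y hy => ((cvx_subset_box hW hy).2).2⟩

theorem isCompact_slice (hW : ∀ ν, |W ν| ≤ M) (hWu : UpperSemicontinuous W)
    (μ : stdSimplex ℝ S) : IsCompact {y | ((μ : S → ℝ), y) ∈ cvx W M} := by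
  apply isCompact_Icc.of_isClosed_subset ((isCompact_cvx hW hWu).isClosed.preimage
    (Continuous.prodMk_right (μ : S → ℝ)))
  exact fun y hy => (cvx_subset_box hW hy).2

theorem gfun_mem_slice (hW : ∀ ν, |W ν| ≤ M) (hWu : UpperSemicontinuous W)
    (μ : stdSimplex ℝ S) : ((μ : S → ℝ), gfun W M μ) ∈ cvx W M :=
  (isCompact_slice hW hWu μ).sSup_mem (slice_nonempty hW μ)

theorem le_gfun (hW : ∀ ν, |W ν| ≤ M) {μ : stdSimplex ℝ S} {y : ℝ}
    (hy : ((μ : S → ℝ), y) ∈ cvx W M) : y ≤ gfun W M μ :=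
  le_csSup (slice_bddAbove hW μ) hy

theorem gfun_usc (hW : ∀ ν, |W ν| ≤ M) (hWu : UpperSemicontinuous W) :
    UpperSemicontinuous (gfun W M) := by
  intro μ0 c hc
  set C : Set (S → ℝ) := Prod.fst '' (cvx W M ∩ {p | c ≤ p.2}) with hC
  have hCcl : IsClosed C :=
    (((isCompact_cvx hW hWu).inter_right (isClosed_le continuous_const continuous_snd)).image
      continuous_fst).isClosed
  have hμ0 : (μ0 : S → ℝ) ∉ C := by
    rintro ⟨p, ⟨hp, hcp⟩, hfst⟩
    have hp2 : ((μ0 : S → ℝ), p.2) ∈ cvx W M := by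
      have : p = ((μ0 : S → ℝ), p.2) := by
        rw [← hfst]
      rwa [this] at hp
    exact absurd ((le_gfun hW hp2).trans_lt hc) (not_lt.2 hcp)
  have hmem : {ν : stdSimplex ℝ S | (ν : S → ℝ) ∉ C} ∈ nhds μ0 :=
    (hCcl.isOpen_compl.preimage continuous_subtype_val).mem_nhds hμ0
  filter_upwards [hmem] with μ hμ
  by_contra h
  push_neg at h
  exact hμ ⟨((μ : S → ℝ), gfun W M μ), ⟨gfun_mem_slice hW hWu μ, h⟩, rfl⟩

end Geom


section Bridge

variable {S : Type*} [Fintype S] [Nonempty S]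

/-- Generic concavification of a function on the simplex. -/
def concW (W : stdSimplex ℝ S → ℝ) (μ : stdSimplex ℝ S) : ℝ :=
  sSup {x : ℝ | ∃ τ ∈ barycentric μ, x = ∫ ν, W ν ∂(τ : Measure (stdSimplex ℝ S))}

theorem coord_continuous (s : S) : Continuous fun ν : stdSimplex ℝ S => (ν : S → ℝ) s :=
  (continuous_apply s).comp continuous_subtype_val

theorem integrable_of_bounded {f : stdSimplex ℝ S → ℝ} {C : ℝ}
    (hf : StronglyMeasurable f) (hC : ∀ ν, |f ν| ≤ C) (P : Measure (stdSimplex ℝ S))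
    [IsProbabilityMeasure P] : Integrable f P :=
  Integrable.mono' (integrable_const C) hf.aestronglyMeasurable
    (Filter.Eventually.of_forall fun ν => by simpa using hC ν)

theorem myIntegrable_dirac {X : Type*} [MeasurableSpace X]
    {f : X → ℝ} (hf : StronglyMeasurable f) (a : X) :
    Integrable f (Measure.dirac a) := by
  refine ⟨hf.aestronglyMeasurable, ?_⟩
  rw [HasFiniteIntegral, MeasureTheory.lintegral_dirac' a hf.measurable.enorm]
  exact enorm_lt_top

theorem isProb_comb {ι X : Type*} [Fintype ι] [MeasurableSpace X]
    {w : ι → ℝ} (hw : ∀ i, 0 ≤ w i) (hw1 : ∑ i, w i = 1) (x : ι → X) :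
    IsProbabilityMeasure (∑ i : ι, ENNReal.ofReal (w i) • Measure.dirac (x i)) := by
  constructor
  rw [Measure.finset_sum_apply]
  simp only [Measure.smul_apply, smul_eq_mul]
  have : ∀ i : ι, Measure.dirac (x i) Set.univ = 1 := fun i => by simp
  simp only [this, mul_one]
  rw [← ENNReal.ofReal_sum_of_nonneg fun i _ => hw i, hw1, ENNReal.ofReal_one]

theorem integral_dirac_comb {ι X : Type*} [Fintype ι] [MeasurableSpace X]
    {w : ι → ℝ} (hw : ∀ i, 0 ≤ w i) (x : ι → X) {f : X → ℝ} (hf : StronglyMeasurable f) :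
    ∫ p, f p ∂(∑ i : ι, ENNReal.ofReal (w i) • Measure.dirac (x i)) = ∑ i, w i * f (x i) := by
  rw [integral_finset_sum_measure fun i _ =>
    (myIntegrable_dirac hf (x i)).smul_measure ENNReal.ofReal_ne_top]
  refine Finset.sum_congr rfl fun i _ => ?_
  rw [integral_smul_measure, integral_dirac' f _ hf, ENNReal.toReal_ofReal (hw i), smul_eq_mul]

variable {W : stdSimplex ℝ S → ℝ} {M : ℝ}

theorem integral_W_le (hW : ∀ ν, |W ν| ≤ M) (hWu : UpperSemicontinuous W)
    (τ : ProbabilityMeasure (stdSimplex ℝ S)) :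
    ∫ ν, W ν ∂(τ : Measure (stdSimplex ℝ S)) ≤ M := by
  have h := integral_mono
    (integrable_of_bounded hWu.measurable.stronglyMeasurable hW (τ : Measure (stdSimplex ℝ S)))
    (integrable_const M) (fun ν => (abs_le.1 (hW ν)).2)
  simpa using h

theorem concW_bddAbove (hW : ∀ ν, |W ν| ≤ M) (hWu : UpperSemicontinuous W)
    (μ : stdSimplex ℝ S) :
    BddAbove {x : ℝ | ∃ τ ∈ barycentric μ, x = ∫ ν, W ν ∂(τ : Measure (stdSimplex ℝ S))} := by
  refine ⟨M, ?_⟩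
  rintro x ⟨τ, -, rfl⟩
  exact integral_W_le hW hWu τ

/-- The point mass at `μ` is a `ProbabilityMeasure` with barycenter `μ`. -/
def diracPM (μ : stdSimplex ℝ S) : ProbabilityMeasure (stdSimplex ℝ S) :=
  ⟨Measure.dirac μ, inferInstance⟩

theorem diracPM_mem_barycentric (μ : stdSimplex ℝ S) : diracPM μ ∈ barycentric μ := by
  intro s
  exact integral_dirac' _ μ (coord_continuous s).stronglyMeasurable

theorem concW_set_nonempty (μ : stdSimplex ℝ S) :
    {x : ℝ | ∃ τ ∈ barycentric μ, x = ∫ ν, W ν ∂(τ : Measure (stdSimplex ℝ S))}.Nonempty :=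
  ⟨_, diracPM μ, diracPM_mem_barycentric μ, rfl⟩

theorem gfun_le_concW (hW : ∀ ν, |W ν| ≤ M) (hWu : UpperSemicontinuous W)
    (μ : stdSimplex ℝ S) : gfun W M μ ≤ concW W μ := by
  apply csSup_le (slice_nonempty hW μ)
  intro y hy
  have hy' : ((μ : S → ℝ), y) ∈ convexHull ℝ (hypo W M) := hy
  obtain ⟨ι, hι, z, w, hz, hai, hwpos, hwsum, hzy⟩ :=
    eq_pos_convex_span_of_mem_convexHull hy'
  have hq : ∀ i : ι, ∃ q : stdSimplex ℝ S × ℝ,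
      (-M ≤ q.2 ∧ q.2 ≤ W q.1) ∧ ((q.1 : S → ℝ), q.2) = z i := fun i => hz ⟨i, rfl⟩
  choose q hq1 hq2 using hq
  have hwnn : ∀ i, 0 ≤ w i := fun i => (hwpos i).le
  haveI := isProb_comb hwnn hwsum (fun i => (q i).1)
  set τ : ProbabilityMeasure (stdSimplex ℝ S) :=
    ⟨∑ i : ι, ENNReal.ofReal (w i) • Measure.dirac ((q i).1), inferInstance⟩ with hτdef
  have hτm : (τ : Measure (stdSimplex ℝ S)) =
      ∑ i : ι, ENNReal.ofReal (w i) • Measure.dirac ((q i).1) := rfl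
  -- component identities
  have hfst : ∀ s : S, ∑ i, w i * ((q i).1 : S → ℝ) s = (μ : S → ℝ) s := by
    intro s
    have h1 := congrArg Prod.fst hzy
    rw [Prod.fst_sum] at h1
    have h2 : ∀ i : ι, (w i • z i).1 = w i • (z i).1 := fun i => rfl
    simp only [h2] at h1
    have h3 : ∀ i : ι, (z i).1 = ((q i).1 : S → ℝ) := fun i =>
      (congrArg Prod.fst (hq2 i)).symm
    simp only [h3] at h1
    have h4 := congrFun h1 s
    rw [Finset.sum_apply] at h4
    simpa using h4
  have hsnd : ∑ i, w i * (q i).2 = y := by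
    have h1 := congrArg Prod.snd hzy
    rw [Prod.snd_sum] at h1
    have h2 : ∀ i : ι, (w i • z i).2 = w i * (z i).2 := fun i => rfl
    simp only [h2] at h1
    have h3 : ∀ i : ι, (z i).2 = (q i).2 := fun i => (congrArg Prod.snd (hq2 i)).symm
    simp only [h3] at h1
    exact h1
  have hbary : τ ∈ barycentric μ := by
    intro s
    rw [hτm, integral_dirac_comb hwnn _ (coord_continuous s).stronglyMeasurable]
    exact hfst s
  have hint : ∫ ν, W ν ∂(τ : Measure (stdSimplex ℝ S)) = ∑ i, w i * W ((q i).1) := by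
    rw [hτm, integral_dirac_comb hwnn _ hWu.measurable.stronglyMeasurable]
  have hyx : y ≤ ∫ ν, W ν ∂(τ : Measure (stdSimplex ℝ S)) := by
    rw [hint, ← hsnd]
    exact Finset.sum_le_sum fun i _ =>
      mul_le_mul_of_nonneg_left (hq1 i).2 (hwnn i)
  exact hyx.trans (le_csSup (concW_bddAbove hW hWu μ)
    ⟨τ, hbary, rfl⟩)

theorem concW_le_gfun (hW : ∀ ν, |W ν| ≤ M) (hWu : UpperSemicontinuous W)
    (μ : stdSimplex ℝ S) : concW W μ ≤ gfun W M μ := by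
  classical
  apply csSup_le (concW_set_nonempty μ)
  rintro x ⟨τ, hτ, rfl⟩
  apply le_gfun hW
  by_contra hp
  obtain ⟨f, uu, hfu, hup⟩ := geometric_hahn_banach_closed_point
    (convex_convexHull ℝ _) (isCompact_cvx hW hWu).isClosed hp
  set c : S → ℝ := fun s => f (Pi.single s 1, 0) with hc
  set b : ℝ := f ((0 : S → ℝ), 1) with hb
  have hdec : ∀ (x : S → ℝ) (r : ℝ), f (x, r) = ∑ s, x s * c s + r * b := by
    intro x r
    have h1 : (x, r) = (∑ s, x s • ((Pi.single s (1:ℝ) : S → ℝ), (0:ℝ))) + r • ((0 : S → ℝ), (1:ℝ)) := by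
      apply Prod.ext
      · simp only [Prod.fst_add, Prod.fst_sum, Prod.smul_fst, Prod.snd_add]
        have : x = ∑ s, x s • (Pi.single s (1:ℝ) : S → ℝ) := by
          funext j
          rw [Finset.sum_apply]
          simp only [Pi.smul_apply, Pi.single_apply, smul_eq_mul, mul_ite, mul_one, mul_zero]
          simp
        rw [← this]
        simp
      · simp only [Prod.snd_add, Prod.snd_sum, Prod.smul_snd]
        simp
    rw [h1, map_add, map_sum]
    simp only [ContinuousLinearMap.map_smul, smul_eq_mul]
    rfl
  haveI : IsProbabilityMeasure (τ : Measure (stdSimplex ℝ S)) := τ.prop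
  have hφlt : ∀ ν : stdSimplex ℝ S, ∑ s, (ν : S → ℝ) s * c s + W ν * b < uu := by
    intro ν
    have h := hfu _ (subset_convexHull ℝ _ (mem_hypo_self hW ν))
    rwa [hdec] at h
  have hcint : ∀ s : S, Integrable (fun ν : stdSimplex ℝ S => (ν : S → ℝ) s * c s)
      (τ : Measure (stdSimplex ℝ S)) := by
    intro s
    apply integrable_of_bounded (C := |c s|)
      (((coord_continuous s).mul continuous_const).stronglyMeasurable)
    intro ν
    simp only [Pi.mul_apply]
    rw [abs_mul]
    have h1 : |(ν : S → ℝ) s| ≤ 1 := by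
      rw [abs_of_nonneg (show 0 ≤ (ν : S → ℝ) s from ν.2.1 s)]
      calc (ν : S → ℝ) s ≤ ∑ s', (ν : S → ℝ) s' :=
            Finset.single_le_sum (fun s' _ => ν.2.1 s') (Finset.mem_univ s)
        _ = 1 := ν.2.2
    calc |(ν : S → ℝ) s| * |c s| ≤ 1 * |c s| :=
          mul_le_mul_of_nonneg_right h1 (abs_nonneg _)
      _ = |c s| := one_mul _
  have hWint : Integrable W (τ : Measure (stdSimplex ℝ S)) :=
    integrable_of_bounded hWu.measurable.stronglyMeasurable hW _
  have hint : ∫ ν, (∑ s, (ν : S → ℝ) s * c s + W ν * b) ∂(τ : Measure (stdSimplex ℝ S))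
      = ∑ s, (μ : S → ℝ) s * c s + (∫ ν, W ν ∂(τ : Measure (stdSimplex ℝ S))) * b := by
    rw [integral_add (integrable_finset_sum _ fun s _ => hcint s) (hWint.mul_const b)]
    congr 1
    · rw [integral_finset_sum _ fun s _ => hcint s]
      refine Finset.sum_congr rfl fun s _ => ?_
      rw [integral_mul_const, hτ s]
    · rw [integral_mul_const]
  have hle : f ((μ : S → ℝ), ∫ ν, W ν ∂(τ : Measure (stdSimplex ℝ S))) ≤ uu := by
    rw [hdec, ← hint]
    have := integral_mono
      (Integrable.add (integrable_finset_sum _ fun s _ => hcint s) (hWint.mul_const b))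
      (integrable_const uu) (fun ν => (hφlt ν).le)
    simpa using this
  exact absurd hup (not_lt.2 hle)

end Bridge

/-- The concavification `Ŵ` is upper semicontinuous on `Δ(S)`. -/
theorem concavification_upperSemicontinuous {S : Type*} [Fintype S] [Nonempty S]
    {L : Type*} [Fintype L] [DecidableEq L]
    {A : L → Type*} [∀ l, Fintype (A l)] [∀ l, Nonempty (A l)]
    {T : L → Type*} [∀ l, Fintype (T l)] [∀ l, Nonempty (T l)]
    (u : ∀ l, T l → S → A l → ℝ) (v : S → (∀ l, A l) → ℝ)
    (η : ∀ l, T l → ℝ) (hη : ∀ l, η l ∈ stdSimplex ℝ (T l)) :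
    UpperSemicontinuous (concavification u v η) := by
  have hW : ∀ ν, |senderGain u v η ν| ≤ vBound v := abs_senderGain_le u v η hη
  have hWu : UpperSemicontinuous (senderGain u v η) := senderGain_usc u v η hη
  have heq : concavification u v η = gfun (senderGain u v η) (vBound v) := by
    funext μ
    exact le_antisymm (concW_le_gfun hW hWu μ) (gfun_le_concW hW hWu μ)
  rw [heq]
  exact gfun_usc hW hWu


end
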